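/- Let q = ℓ^2 with ℓ ≥ 7 (so q ≥ 49). Then there exists δ ∈ (0, 1 - 1/q) such that the Tsfasman–Vladut–Zink bound exceeds the Gilbert–Varshamov bound at δ, i.e., 1 - δ - 1/(ℓ - 1) > 1 - δ·log_q(q-1) + δ·log_q(δ) + (1-δ)·log_q(1-δ). -/

import Mathlib

set_option maxHeartbeats 1000000

/-- log x ≤ x / e for x > 0. -/
lemma log_le_div_exp_one (x : ℝ) (hx : 0 < x) : Real.log x ≤ x / Real.exp 1 := by
  have h := Real.log_le_sub_one_of_pos (x := x / Real.exp 1) (by positivity)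
  rw [Real.log_div (ne_of_gt hx) (ne_of_gt (Real.exp_pos 1)), Real.log_exp] at h
  linarith

lemma tvz_gv_algebra (A B C M : ℝ) (hA : 0 < A) (hM : 0 < M)
    (hkey : (C - (A - B) / 2) * M > A) :
    1/2 - 1/M > 1 - 1/2 * (B / A) + 1/2 * (-C / A) + 1/2 * (-C / A) := by
  rw [gt_iff_lt, ← sub_pos]
  have h : 1/2 - 1/M - (1 - 1/2 * (B / A) + 1/2 * (-C / A) + 1/2 * (-C / A))
      = ((C - (A - B) / 2) * M - A) / (M * A) := by
    field_simp
    ring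
  rw [h]
  exact div_pos (by linarith) (by positivity)

/-- For q = ℓ² with ℓ ≥ 7, the Tsfasman–Vladut–Zink bound exceeds the
Gilbert–Varshamov bound at some δ ∈ (0, 1 - 1/q). -/
theorem tvz_beats_gv (ℓ q : ℕ) (hℓ : 7 ≤ ℓ) (hq : q = ℓ ^ 2) :
    ∃ δ : ℝ, 0 < δ ∧ δ < 1 - 1 / q ∧
      1 - δ - 1 / ((ℓ : ℝ) - 1) >
        1 - δ * Real.logb q (q - 1) + δ * Real.logb q δ +
          (1 - δ) * Real.logb q (1 - δ) := by
  have hL : (7 : ℝ) ≤ (ℓ : ℝ) := by exact_mod_cast hℓ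
  set L : ℝ := (ℓ : ℝ) with hLdef
  have hQcast : (q : ℝ) = L ^ 2 := by rw [hq]; push_cast; ring
  set Q : ℝ := (q : ℝ) with hQdef
  have hQ : 49 ≤ Q := by nlinarith
  -- square root of L
  set s : ℝ := Real.sqrt L with hsdef
  have hs2 : s ^ 2 = L := Real.sq_sqrt (by linarith)
  have hs26 : 2.6 ≤ s := by
    nlinarith [Real.sqrt_nonneg L, hs2]
  have hspos : 0 < s := by linarith
  -- log bounds
  have he : 2.7182818283 < Real.exp 1 := Real.exp_one_gt_d9
  have hlog2 : 0.6931471803 < Real.log 2 := Real.log_two_gt_d9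
  have hApos : 0 < Real.log Q := Real.log_pos (by linarith)
  -- log Q = 2 * log L
  have hAeq : Real.log Q = 2 * Real.log L := by
    rw [hQcast, Real.log_pow]; push_cast; ring
  -- log L = 2 * log s
  have hLs : Real.log L = 2 * Real.log s := by
    rw [← hs2, Real.log_pow]; push_cast; ring
  have hlogs : Real.log s ≤ s / Real.exp 1 := log_le_div_exp_one s hspos
  -- s ≤ 0.46 (L - 1)
  have hsL : s ≤ 0.46 * (L - 1) := by nlinarith [hs2, hs26]
  -- log Q < 0.677 * (L - 1)
  have hbound : Real.log Q < 0.677 * (L - 1) := by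
    have hexp : Real.log Q ≤ 4 * s / Real.exp 1 := by
      rw [hAeq, hLs]
      rw [le_div_iff₀ (Real.exp_pos 1)]
      rw [le_div_iff₀ (Real.exp_pos 1)] at hlogs
      nlinarith
    have : 4 * s / Real.exp 1 < 0.677 * (L - 1) := by
      rw [div_lt_iff₀ (Real.exp_pos 1)]
      nlinarith
    linarith
  -- log Q - log (Q-1) ≤ 1/48
  have hQ1pos : (0:ℝ) < Q - 1 := by linarith
  have hdiff : Real.log Q - Real.log (Q - 1) ≤ 1 / 48 := by
    have h := Real.log_le_sub_one_of_pos (x := Q / (Q - 1)) (by positivity)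
    rw [Real.log_div (by linarith) (ne_of_gt hQ1pos)] at h
    have h2 : Q / (Q - 1) - 1 = 1 / (Q - 1) := by field_simp; ring
    have h3 : 1 / (Q - 1) ≤ 1 / 48 := by
      apply one_div_le_one_div_of_le <;> linarith
    linarith
  -- key inequality
  have hkey : (Real.log 2 - (Real.log Q - Real.log (Q - 1)) / 2) * (L - 1) > Real.log Q := by
    have h1 : Real.log 2 - (Real.log Q - Real.log (Q - 1)) / 2 ≥ 0.68 := by linarith
    nlinarith
  refine ⟨1/2, by norm_num, ?_, ?_⟩
  · have : 1 / Q ≤ 1 / 49 := by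
      apply one_div_le_one_div_of_le <;> linarith
    linarith
  · have h12 : (1:ℝ) - 1/2 = 1/2 := by norm_num
    rw [h12]
    have hlb : Real.logb Q (1/2 : ℝ) = - Real.log 2 / Real.log Q := by
      rw [Real.logb, one_div, Real.log_inv]
    have hlb2 : Real.logb Q (Q - 1) = Real.log (Q - 1) / Real.log Q := rfl
    rw [hlb, hlb2]
    exact tvz_gv_algebra _ _ _ _ hApos (by linarith) hkey
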